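/- Let (a_m)_{m≥0} be nonnegative numbers with ∑ a_m = 1, let μ = ∑ m a_m, S = ∑ m² a_m and V = S - μ². Then for every M > 0, ∑_{m > μ + M} m^{7/5} a_m ≤ M^{-3/5} S^{7/10} V^{3/10}. -/

import Mathlib

open Real

/-- Hölder tail estimate for particle number distributions: if `a_m ≥ 0`,
`∑ a_m = 1`, `μ = ∑ m a_m`, `S = ∑ m² a_m` and `V = S - μ²`, then for every
`M > 0`, `∑_{m > μ+M} m^{7/5} a_m ≤ M^{-3/5} S^{7/10} V^{3/10}`. -/
theorem stmt_12 (a : ℕ → ℝ) (ha_nonneg : ∀ m, 0 ≤ a m)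
    (ha_sum : Summable a) (ha_total : ∑' m, a m = 1)
    (hμ : Summable fun m : ℕ => (m : ℝ) * a m)
    (hS : Summable fun m : ℕ => (m : ℝ) ^ 2 * a m)
    (h75 : Summable fun m : ℕ => (m : ℝ) ^ ((7 : ℝ) / 5) * a m)
    (μ S V : ℝ)
    (hμdef : μ = ∑' m : ℕ, (m : ℝ) * a m)
    (hSdef : S = ∑' m : ℕ, (m : ℝ) ^ 2 * a m)
    (hVdef : V = S - μ ^ 2)
    (M : ℝ) (hM : 0 < M) :
    (∑' m : ℕ, if μ + M < (m : ℝ) then (m : ℝ) ^ ((7 : ℝ) / 5) * a m else 0)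
      ≤ M ^ (-(3 : ℝ) / 5) * S ^ ((7 : ℝ) / 10) * V ^ ((3 : ℝ) / 10) := by
  set f : ℕ → ℝ := fun m => ((m : ℝ) ^ 2 * a m) ^ ((7 : ℝ) / 10) with hf
  set g : ℕ → ℝ := fun m => (((m : ℝ) - μ) ^ 2 * a m) ^ ((3 : ℝ) / 10) with hg
  have hfn : ∀ m, 0 ≤ f m := fun m =>
    Real.rpow_nonneg (mul_nonneg (sq_nonneg _) (ha_nonneg m)) _
  have hgn : ∀ m, 0 ≤ g m := fun m =>
    Real.rpow_nonneg (mul_nonneg (sq_nonneg _) (ha_nonneg m)) _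
  have hconj : ((10 : ℝ) / 7).HolderConjugate ((10 : ℝ) / 3) :=
    Real.holderConjugate_iff.mpr ⟨by norm_num, by norm_num⟩
  -- f^(10/7) = m² a m
  have hfp : ∀ m, f m ^ ((10 : ℝ) / 7) = (m : ℝ) ^ 2 * a m := by
    intro m
    rw [hf, ← Real.rpow_mul (mul_nonneg (sq_nonneg _) (ha_nonneg m))]
    norm_num
  -- g^(10/3) = (m-μ)² a m
  have hgp : ∀ m, g m ^ ((10 : ℝ) / 3) = ((m : ℝ) - μ) ^ 2 * a m := by
    intro m
    rw [hg, ← Real.rpow_mul (mul_nonneg (sq_nonneg _) (ha_nonneg m))]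
    norm_num
  -- summability of (m-μ)² a m
  have hvar_eq : (fun m : ℕ => ((m : ℝ) - μ) ^ 2 * a m)
      = fun m : ℕ => ((m : ℝ) ^ 2 * a m - (2 * μ) * ((m : ℝ) * a m)) + μ ^ 2 * a m := by
    funext m; ring
  have hvar_sum : Summable fun m : ℕ => ((m : ℝ) - μ) ^ 2 * a m := by
    rw [hvar_eq]
    exact (hS.sub (hμ.mul_left _)).add (ha_sum.mul_left _)
  have hvar_tsum : (∑' m : ℕ, ((m : ℝ) - μ) ^ 2 * a m) = V := by
    rw [hvar_eq, Summable.tsum_add (hS.sub (hμ.mul_left _)) (ha_sum.mul_left _),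
      Summable.tsum_sub hS (hμ.mul_left _), tsum_mul_left, tsum_mul_left, ha_total,
      ← hμdef, ← hSdef, hVdef]
    ring
  have hfsum : Summable fun m => f m ^ ((10 : ℝ) / 7) := by
    simpa only [hfp] using hS
  have hgsum : Summable fun m => g m ^ ((10 : ℝ) / 3) := by
    simpa only [hgp] using hvar_sum
  obtain ⟨hfg_sum, hholder⟩ :=
    summable_and_inner_le_Lp_mul_Lq_tsum_of_nonneg hconj hfn hgn hfsum hgsum
  -- pointwise tail bound
  have hpt : ∀ m : ℕ, (if μ + M < (m : ℝ) then (m : ℝ) ^ ((7 : ℝ) / 5) * a m else 0)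
      ≤ M ^ (-(3 : ℝ) / 5) * (f m * g m) := by
    intro m
    by_cases h : μ + M < (m : ℝ)
    · rw [if_pos h]
      have hmμ : M ≤ (m : ℝ) - μ := by linarith
      have hmμ0 : (0 : ℝ) ≤ (m : ℝ) - μ := le_trans hM.le hmμ
      have hfg : f m * g m
          = (m : ℝ) ^ ((7 : ℝ) / 5) * ((m : ℝ) - μ) ^ ((3 : ℝ) / 5) * a m := by
        show ((m : ℝ) ^ 2 * a m) ^ ((7 : ℝ) / 10) *
            ((((m : ℝ) - μ)) ^ 2 * a m) ^ ((3 : ℝ) / 10)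
          = (m : ℝ) ^ ((7 : ℝ) / 5) * ((m : ℝ) - μ) ^ ((3 : ℝ) / 5) * a m
        rw [Real.mul_rpow (sq_nonneg _) (ha_nonneg m),
          Real.mul_rpow (sq_nonneg _) (ha_nonneg m),
          ← Real.rpow_natCast ((m : ℝ)) 2, ← Real.rpow_natCast ((m : ℝ) - μ) 2,
          ← Real.rpow_mul (Nat.cast_nonneg m), ← Real.rpow_mul hmμ0]
        have ha : a m ^ ((7 : ℝ) / 10) * a m ^ ((3 : ℝ) / 10) = a m := by
          rw [← Real.rpow_add' (ha_nonneg m) (by norm_num)]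
          norm_num
        push_cast
        norm_num
        calc ((m : ℝ) ^ ((7 : ℝ) / 5) * a m ^ ((7 : ℝ) / 10)) *
              (((m : ℝ) - μ) ^ ((3 : ℝ) / 5) * a m ^ ((3 : ℝ) / 10))
            = (m : ℝ) ^ ((7 : ℝ) / 5) * ((m : ℝ) - μ) ^ ((3 : ℝ) / 5)
              * (a m ^ ((7 : ℝ) / 10) * a m ^ ((3 : ℝ) / 10)) := by ring
          _ = (m : ℝ) ^ ((7 : ℝ) / 5) * ((m : ℝ) - μ) ^ ((3 : ℝ) / 5) * a m := by rw [ha]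
      rw [hfg]
      have hMle : M ^ ((3 : ℝ) / 5) ≤ ((m : ℝ) - μ) ^ ((3 : ℝ) / 5) :=
        Real.rpow_le_rpow hM.le hmμ (by norm_num)
      have h1 : (m : ℝ) ^ ((7 : ℝ) / 5) * a m
          = M ^ (-(3 : ℝ) / 5) * ((m : ℝ) ^ ((7 : ℝ) / 5) * M ^ ((3 : ℝ) / 5) * a m) := by
        rw [show (-(3 : ℝ) / 5) = -((3 : ℝ)/5) by norm_num, Real.rpow_neg hM.le]
        field_simp
      rw [h1]
      have hMpos : (0 : ℝ) < M ^ (-(3 : ℝ) / 5) := Real.rpow_pos_of_pos hM _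
      apply mul_le_mul_of_nonneg_left _ hMpos.le
      have := ha_nonneg m
      have hm75 : (0 : ℝ) ≤ (m : ℝ) ^ ((7 : ℝ) / 5) := Real.rpow_nonneg (Nat.cast_nonneg m) _
      calc (m : ℝ) ^ ((7 : ℝ) / 5) * M ^ ((3 : ℝ) / 5) * a m
          ≤ (m : ℝ) ^ ((7 : ℝ) / 5) * ((m : ℝ) - μ) ^ ((3 : ℝ) / 5) * a m := by
            apply mul_le_mul_of_nonneg_right _ (ha_nonneg m)
            exact mul_le_mul_of_nonneg_left hMle hm75
        _ = _ := rfl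
    · rw [if_neg h]
      exact mul_nonneg (Real.rpow_nonneg hM.le _) (mul_nonneg (hfn m) (hgn m))
  have hRsum : Summable fun m => M ^ (-(3 : ℝ) / 5) * (f m * g m) := hfg_sum.mul_left _
  have htail_sum : Summable fun m : ℕ =>
      (if μ + M < (m : ℝ) then (m : ℝ) ^ ((7 : ℝ) / 5) * a m else 0) := by
    apply h75.of_nonneg_of_le
    · intro m; have := ha_nonneg m
      by_cases h : μ + M < (m : ℝ)
      · rw [if_pos h]; positivity
      · rw [if_neg h]
    · intro m; have := ha_nonneg m
      by_cases h : μ + M < (m : ℝ)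
      · rw [if_pos h]
      · rw [if_neg h]; positivity
  calc (∑' m : ℕ, if μ + M < (m : ℝ) then (m : ℝ) ^ ((7 : ℝ) / 5) * a m else 0)
      ≤ ∑' m : ℕ, M ^ (-(3 : ℝ) / 5) * (f m * g m) :=
        Summable.tsum_le_tsum hpt htail_sum hRsum
    _ = M ^ (-(3 : ℝ) / 5) * ∑' m : ℕ, f m * g m := tsum_mul_left
    _ ≤ M ^ (-(3 : ℝ) / 5) * (S ^ ((7 : ℝ) / 10) * V ^ ((3 : ℝ) / 10)) := by
        apply mul_le_mul_of_nonneg_left _ (Real.rpow_pos_of_pos hM _).le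
        have h1 : (∑' m, f m ^ ((10 : ℝ) / 7)) = S := by
          simp only [hfp]; exact hSdef.symm
        have h2 : (∑' m, g m ^ ((10 : ℝ) / 3)) = V := by
          simp only [hgp]; exact hvar_tsum
        have h17 : (1 : ℝ) / ((10 : ℝ) / 7) = 7 / 10 := by norm_num
        have h13 : (1 : ℝ) / ((10 : ℝ) / 3) = 3 / 10 := by norm_num
        rw [h1, h17, h2, h13] at hholder
        convert hholder using 3
    _ = M ^ (-(3 : ℝ) / 5) * S ^ ((7 : ℝ) / 10) * V ^ ((3 : ℝ) / 10) := by ring
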